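/- Let a ∈ ℝ, let F : ℝ → ℝ satisfy dF ≪ dS with density f = dF/dS. Then for every x > a, (F(x) − F(a))² ≤ 2·√(S(x) − S(a)) · ∫_{(a,x]} f(t)² √(S(t) − S(a)) dS(t). -/

import Mathlib

open MeasureTheory Set
open scoped ENNReal

lemma map_restrict_eq (S : ℝ → ℝ) (hScont : Continuous S) (hSmono : StrictMono S)
    (μS : Measure ℝ) (hμS : ∀ c d : ℝ, c ≤ d → μS (Ioc c d) = ENNReal.ofReal (S d - S c))
    (a x : ℝ) (hax : a ≤ x) :
    (μS.restrict (Ioc a x)).map S = volume.restrict (Ioc (S a) (S x)) := by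
  have key : ∀ u v : ℝ, ((μS.restrict (Ioc a x)).map S) (Ioc u v)
      = ENNReal.ofReal (min v (S x) - max u (S a)) := by
    intro u v
    rw [Measure.map_apply hScont.measurable measurableSet_Ioc,
      Measure.restrict_apply (hScont.measurable measurableSet_Ioc)]
    have hset : S ⁻¹' Ioc u v ∩ Ioc a x = S ⁻¹' Ioc (max u (S a)) (min v (S x)) := by
      ext t
      simp only [mem_inter_iff, mem_preimage, mem_Ioc, sup_lt_iff, le_inf_iff,
        ← hSmono.lt_iff_lt (a := a) (b := t), ← hSmono.le_iff_le (a := t) (b := x)]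
      tauto
    rw [hset]
    by_cases h : max u (S a) < min v (S x)
    · have hu' : max u (S a) ∈ Icc (S a) (S x) :=
        ⟨le_max_right _ _, h.le.trans (min_le_right _ _)⟩
      have hv' : min v (S x) ∈ Icc (S a) (S x) :=
        ⟨(le_max_right u (S a)).trans h.le, min_le_right _ _⟩
      obtain ⟨c, hc, hSc⟩ := intermediate_value_Icc hax hScont.continuousOn hu'
      obtain ⟨d, hd, hSd⟩ := intermediate_value_Icc hax hScont.continuousOn hv'
      have hcd : c ≤ d := by
        have : S c < S d := by rw [hSc, hSd]; exact h
        exact (hSmono.lt_iff_lt.mp this).le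
      have hpre : S ⁻¹' Ioc (max u (S a)) (min v (S x)) = Ioc c d := by
        ext t
        simp only [mem_preimage, mem_Ioc, ← hSc, ← hSd, hSmono.lt_iff_lt, hSmono.le_iff_le]
      rw [hpre, hμS c d hcd, hSc, hSd]
    · push_neg at h
      rw [Ioc_eq_empty (by exact fun hlt => absurd hlt (not_lt.mpr h)), preimage_empty,
        measure_empty, eq_comm, ENNReal.ofReal_eq_zero]
      linarith
  refine Measure.ext_of_Ioc' _ _ (fun u v _ => ?_) (fun u v _ => ?_)
  · rw [key]; exact ENNReal.ofReal_ne_top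
  · rw [key, Measure.restrict_apply measurableSet_Ioc, Ioc_inter_Ioc, Real.volume_Ioc]

lemma weight_integral (S : ℝ → ℝ) (hScont : Continuous S) (hSmono : StrictMono S)
    (μS : Measure ℝ) (hμS : ∀ c d : ℝ, c ≤ d → μS (Ioc c d) = ENNReal.ofReal (S d - S c))
    (a x : ℝ) (hax : a < x) :
    ∫⁻ t in Ioc a x, ENNReal.ofReal ((Real.sqrt (S t - S a))⁻¹) ∂μS
      = ENNReal.ofReal (2 * Real.sqrt (S x - S a)) := by
  have hφ : Measurable fun u : ℝ => ENNReal.ofReal ((Real.sqrt (u - S a))⁻¹) :=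
    ((Real.continuous_sqrt.measurable.comp (measurable_id.sub_const (S a))).inv).ennreal_ofReal
  have hmap := map_restrict_eq S hScont hSmono μS hμS a x hax.le
  have h1 : ∫⁻ t in Ioc a x, ENNReal.ofReal ((Real.sqrt (S t - S a))⁻¹) ∂μS
      = ∫⁻ u in Ioc (S a) (S x), ENNReal.ofReal ((Real.sqrt (u - S a))⁻¹) := by
    rw [← hmap, lintegral_map hφ hScont.measurable]
  rw [h1]
  set L : ℝ := S x - S a with hL
  have hL0 : 0 < L := sub_pos.mpr (hSmono hax)
  have hSx : S x = L + S a := by rw [hL]; ring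
  have hSle : S a ≤ S x := (hSmono hax).le
  have hcongr : ∀ u ∈ Ioc (S a) (S x),
      (Real.sqrt (u - S a))⁻¹ = (u - S a) ^ (-(1/2) : ℝ) := by
    intro u hu
    have h0 : (0:ℝ) < u - S a := sub_pos.mpr hu.1
    rw [Real.rpow_neg h0.le, ← Real.sqrt_eq_rpow]
  -- integrability
  have hii : IntervalIntegrable (fun u : ℝ => (u - S a) ^ (-(1/2) : ℝ)) volume (S a) (S x) := by
    have := (intervalIntegral.intervalIntegrable_rpow' (a := 0) (b := L)
      (r := (-(1/2) : ℝ)) (by norm_num)).comp_sub_right (S a)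
    simpa [hSx.symm] using this
  have hintrpow : IntegrableOn (fun u : ℝ => (u - S a) ^ (-(1/2) : ℝ)) (Ioc (S a) (S x)) :=
    (intervalIntegrable_iff_integrableOn_Ioc_of_le hSle).mp hii
  have hint : IntegrableOn (fun u : ℝ => (Real.sqrt (u - S a))⁻¹) (Ioc (S a) (S x)) := by
    refine hintrpow.congr_fun_ae ?_
    filter_upwards [ae_restrict_mem measurableSet_Ioc] with u hu
    exact (hcongr u hu).symm
  have hnn : 0 ≤ᵐ[volume.restrict (Ioc (S a) (S x))]
      fun u : ℝ => (Real.sqrt (u - S a))⁻¹ :=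
    Filter.Eventually.of_forall fun u => inv_nonneg.mpr (Real.sqrt_nonneg _)
  rw [← ofReal_integral_eq_lintegral_ofReal hint hnn]
  congr 1
  rw [setIntegral_congr_fun measurableSet_Ioc hcongr]
  have hval : ∫ u in Ioc (S a) (S x), (u - S a) ^ (-(1/2) : ℝ)
      = ∫ u in (S a)..(S x), (u - S a) ^ (-(1/2) : ℝ) :=
    (intervalIntegral.integral_of_le hSle).symm
  rw [hval, intervalIntegral.integral_comp_sub_right (fun s => s ^ (-(1/2) : ℝ)) (S a),
    sub_self, ← hL, integral_rpow (Or.inl (by norm_num)),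
    show (-(1/2) : ℝ) + 1 = 1/2 by norm_num,
    Real.zero_rpow (by norm_num : (1/2 : ℝ) ≠ 0), Real.sqrt_eq_rpow]
  ring

/-- (Cauchy–Schwarz step) If `dF ≪ dS` with density `f = dF/dS`, then for
every `x > a`,
`(F(x) − F(a))² ≤ 2·√(S(x) − S(a)) · ∫_{(a,x]} f(t)² √(S(t) − S(a)) dS(t)`. -/
theorem cauchy_schwarz_step
    (S : ℝ → ℝ) (hScont : Continuous S) (hSmono : StrictMono S)
    (μS : Measure ℝ)
    (hμS : ∀ c d : ℝ, c ≤ d → μS (Ioc c d) = ENNReal.ofReal (S d - S c))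
    (a : ℝ) (F f : ℝ → ℝ)
    (hfint : Integrable f μS)
    (hdF : ∀ c d : ℝ, c < d → F d - F c = ∫ t in Ioc c d, f t ∂μS) :
    ∀ x : ℝ, a < x →
      ENNReal.ofReal ((F x - F a) ^ 2) ≤
        ENNReal.ofReal (2 * Real.sqrt (S x - S a)) *
          ∫⁻ t in Ioc a x, ENNReal.ofReal (f t ^ 2 * Real.sqrt (S t - S a)) ∂μS := by
  intro x hax
  set g : ℝ → ℝ := fun t => S t - S a with hg
  set A : ℝ → ℝ≥0∞ := fun t => ENNReal.ofReal (|f t| * Real.sqrt (Real.sqrt (g t))) with hA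
  set B : ℝ → ℝ≥0∞ := fun t => ENNReal.ofReal ((Real.sqrt (Real.sqrt (g t)))⁻¹) with hB
  have hgmeas : Measurable g := hScont.measurable.sub measurable_const
  have hwmeas : Measurable fun t => Real.sqrt (Real.sqrt (g t)) :=
    Real.continuous_sqrt.measurable.comp (Real.continuous_sqrt.measurable.comp hgmeas)
  have hfaemeas : AEMeasurable f (μS.restrict (Ioc a x)) := hfint.aemeasurable.restrict
  have hAmeas : AEMeasurable A (μS.restrict (Ioc a x)) :=
    (((continuous_abs.measurable.comp_aemeasurable hfaemeas)).mul
      hwmeas.aemeasurable).ennreal_ofReal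
  have hBmeas : AEMeasurable B (μS.restrict (Ioc a x)) :=
    (hwmeas.inv.aemeasurable).ennreal_ofReal
  have hgpos : ∀ t ∈ Ioc a x, 0 < g t := fun t ht => sub_pos.mpr (hSmono ht.1)
  have hprod : ∀ᵐ t ∂(μS.restrict (Ioc a x)), A t * B t = ENNReal.ofReal |f t| := by
    filter_upwards [ae_restrict_mem measurableSet_Ioc] with t ht
    have hw : 0 < Real.sqrt (Real.sqrt (g t)) :=
      Real.sqrt_pos.mpr (Real.sqrt_pos.mpr (hgpos t ht))
    rw [hA, hB, ← ENNReal.ofReal_mul (by positivity), mul_assoc,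
      mul_inv_cancel₀ hw.ne', mul_one]
  have hAsq : ∀ᵐ t ∂(μS.restrict (Ioc a x)),
      A t ^ (2:ℝ) = ENNReal.ofReal (f t ^ 2 * Real.sqrt (S t - S a)) := by
    filter_upwards [ae_restrict_mem measurableSet_Ioc] with t ht
    rw [hA, ENNReal.ofReal_rpow_of_nonneg (by positivity) (by norm_num),
      show ((2:ℝ)) = ((2:ℕ):ℝ) by norm_num, Real.rpow_natCast, mul_pow, sq_abs,
      Real.sq_sqrt (Real.sqrt_nonneg _)]
  have hBsq : ∀ᵐ t ∂(μS.restrict (Ioc a x)),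
      B t ^ (2:ℝ) = ENNReal.ofReal ((Real.sqrt (S t - S a))⁻¹) := by
    filter_upwards [ae_restrict_mem measurableSet_Ioc] with t ht
    rw [hB, ENNReal.ofReal_rpow_of_nonneg (inv_nonneg.mpr (Real.sqrt_nonneg _)) (by norm_num),
      show ((2:ℝ)) = ((2:ℕ):ℝ) by norm_num, Real.rpow_natCast, inv_pow,
      Real.sq_sqrt (Real.sqrt_nonneg _)]
  -- step 1 : |F x - F a| ≤ ∫ |f|
  have habs : |F x - F a| ≤ ∫ t in Ioc a x, |f t| ∂μS := by
    rw [hdF a x hax]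
    simpa [Real.norm_eq_abs] using
      norm_integral_le_integral_norm (μ := μS.restrict (Ioc a x)) f
  have hintabs : Integrable (fun t => |f t|) (μS.restrict (Ioc a x)) :=
    hfint.abs.restrict
  have hofint : ENNReal.ofReal (∫ t in Ioc a x, |f t| ∂μS)
      = ∫⁻ t in Ioc a x, ENNReal.ofReal |f t| ∂μS :=
    ofReal_integral_eq_lintegral_ofReal hintabs
      (Filter.Eventually.of_forall fun t => abs_nonneg _)
  -- step 2 : Hölder
  have hconj : Real.HolderConjugate 2 2 := Real.HolderConjugate.two_two
  have holder := ENNReal.lintegral_mul_le_Lp_mul_Lq (μS.restrict (Ioc a x)) hconj hAmeas hBmeas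
  have hABeq : ∫⁻ t in Ioc a x, (A * B) t ∂μS = ∫⁻ t in Ioc a x, ENNReal.ofReal |f t| ∂μS :=
    lintegral_congr_ae hprod
  have hAeq : ∫⁻ t in Ioc a x, A t ^ (2:ℝ) ∂μS
      = ∫⁻ t in Ioc a x, ENNReal.ofReal (f t ^ 2 * Real.sqrt (S t - S a)) ∂μS :=
    lintegral_congr_ae hAsq
  have hBeq : ∫⁻ t in Ioc a x, B t ^ (2:ℝ) ∂μS
      = ENNReal.ofReal (2 * Real.sqrt (S x - S a)) := by
    rw [lintegral_congr_ae hBsq]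
    exact weight_integral S hScont hSmono μS hμS a x hax
  set I : ℝ≥0∞ := ∫⁻ t in Ioc a x, ENNReal.ofReal (f t ^ 2 * Real.sqrt (S t - S a)) ∂μS
  set J : ℝ≥0∞ := ENNReal.ofReal (2 * Real.sqrt (S x - S a))
  have holder2 : ∫⁻ t in Ioc a x, ENNReal.ofReal |f t| ∂μS ≤ I ^ ((1:ℝ)/2) * J ^ ((1:ℝ)/2) := by
    rw [← hABeq]
    calc ∫⁻ t in Ioc a x, (A * B) t ∂μS
        ≤ (∫⁻ t in Ioc a x, A t ^ (2:ℝ) ∂μS) ^ ((1:ℝ)/2)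
          * (∫⁻ t in Ioc a x, B t ^ (2:ℝ) ∂μS) ^ ((1:ℝ)/2) := holder
      _ = I ^ ((1:ℝ)/2) * J ^ ((1:ℝ)/2) := by rw [hAeq, hBeq]
  have h1 : ENNReal.ofReal |F x - F a| ≤ ∫⁻ t in Ioc a x, ENNReal.ofReal |f t| ∂μS := by
    refine le_trans (ENNReal.ofReal_le_ofReal habs) ?_
    rw [hofint]
  have h0 : ENNReal.ofReal ((F x - F a) ^ 2) = ENNReal.ofReal |F x - F a| ^ 2 := by
    rw [← ENNReal.ofReal_pow (abs_nonneg _), sq_abs]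
  rw [h0]
  calc ENNReal.ofReal |F x - F a| ^ 2
      ≤ (∫⁻ t in Ioc a x, ENNReal.ofReal |f t| ∂μS) ^ 2 := pow_le_pow_left' h1 2
    _ ≤ (I ^ ((1:ℝ)/2) * J ^ ((1:ℝ)/2)) ^ 2 := pow_le_pow_left' holder2 2
    _ = I * J := by
        rw [mul_pow, ← ENNReal.rpow_natCast (I ^ ((1:ℝ)/2)) 2,
          ← ENNReal.rpow_natCast (J ^ ((1:ℝ)/2)) 2, ← ENNReal.rpow_mul, ← ENNReal.rpow_mul]
        norm_num
    _ = J * I := mul_comm _ _
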